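/- The morphism φ preserves irreducibility with respect to overlaps: for every finite word w over ℕ, if w is irreducible with respect to overlaps then φ(w) is irreducible with respect to overlaps, and if w is irreducible after the first position then φ(w) is irreducible after the first position. -/

import Mathlib

/-- S⁻¹: move the last letter of a nonempty word to the front. -/
def sInv (w : List ℕ) : List ℕ := w.rotate (w.length - 1)

/-- Apply a substitution `f` letterwise to a word (the morphism determined by `f`). -/
def applyM (f : ℕ → List ℕ) (w : List ℕ) : List ℕ := (w.map f).flatten

/-- Fuel-indexed approximation of the morphism φ: `phiAux n` agrees with φ on all
letters `c < n`.  (Computing φ^c(00) only uses φ on letters smaller than `c`, so the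
recursion is well-founded in the fuel.) -/
def phiAux : ℕ → ℕ → List ℕ
  | 0, _ => []
  | n + 1, c => sInv ((applyM (phiAux n))^[c] [0, 0]) ++ [c + 1]

/-- The morphism φ on letters: φ(h) = S⁻¹(φ^h(00))·(h+1).
In particular φ(0) = 001 and φ(1) = 1001002. -/
def phi (c : ℕ) : List ℕ := phiAux (c + 1) c

/-- The morphism φ on words. -/
def phiW (w : List ℕ) : List ℕ := applyM phi w

lemma phiW_append (s t : List ℕ) : phiW (s ++ t) = phiW s ++ phiW t := by
  simp [phiW, applyM]

lemma phiW_cons (a : ℕ) (t : List ℕ) : phiW (a :: t) = phi a ++ phiW t := by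
  simp [phiW, applyM]

lemma phiW_nil : phiW [] = [] := rfl

lemma phiW_singleton (a : ℕ) : phiW [a] = phi a := by simp [phiW, applyM]

lemma phiW_suffix {s t : List ℕ} (h : s <:+ t) : phiW s <:+ phiW t := by
  obtain ⟨u, rfl⟩ := h
  exact ⟨phiW u, (phiW_append u s).symm⟩

lemma mem_phiW {a : ℕ} {v : List ℕ} (h : a ∈ phiW v) : ∃ b ∈ v, a ∈ phi b := by
  simp only [phiW, applyM, List.mem_flatten, List.mem_map] at h
  obtain ⟨l, ⟨b, hb, rfl⟩, ha⟩ := h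
  exact ⟨b, hb, ha⟩

/-- fuel irrelevance and letter bound -/
lemma phi_aux_master : ∀ c : ℕ,
    (∀ n, c < n → phiAux n c = phi c) ∧ (∀ a ∈ phi c, a ≤ c + 1)
      ∧ phi c = sInv (phiW^[c] [0, 0]) ++ [c + 1] := by
  intro c
  induction c using Nat.strong_induction_on with
  | _ c IH =>
  -- letters of iterates
  have hA : ∀ j ≤ c, ∀ a ∈ phiW^[j] [0, 0], a ≤ j := by
    intro j
    induction j with
    | zero => intro _ a ha; simp at ha; omega
    | succ j ihj =>
      intro hj a ha
      rw [Function.iterate_succ_apply'] at ha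
      obtain ⟨b, hb, hab⟩ := mem_phiW ha
      have hbj : b ≤ j := ihj (by omega) b hb
      have := (IH b (by omega)).2.1 a hab
      omega
  have hB : ∀ n, c ≤ n → ∀ j ≤ c, (applyM (phiAux n))^[j] [0, 0] = phiW^[j] [0, 0] := by
    intro n hn j
    induction j with
    | zero => intro _; rfl
    | succ j ihj =>
      intro hj
      rw [Function.iterate_succ_apply', Function.iterate_succ_apply', ihj (by omega)]
      show applyM (phiAux n) _ = phiW _
      unfold phiW applyM
      congr 1
      apply List.map_congr_left
      intro b hb
      have hbj : b ≤ j := hA j (by omega) b hb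
      exact (IH b (by omega)).1 n (by omega)
  have hC : ∀ n, c < n → phiAux n c = sInv (phiW^[c] [0, 0]) ++ [c + 1] := by
    intro n hn
    obtain ⟨n', rfl⟩ : ∃ n', n = n' + 1 := ⟨n - 1, by omega⟩
    show sInv ((applyM (phiAux n'))^[c] [0, 0]) ++ [c + 1] = _
    rw [hB n' (by omega) c le_rfl]
  have hfuel : ∀ n, c < n → phiAux n c = phi c := by
    intro n hn
    rw [hC n hn]; exact (hC (c + 1) (by omega)).symm
  have heq : phi c = sInv (phiW^[c] [0, 0]) ++ [c + 1] := by
    conv_lhs => rw [show phi c = phiAux (c+1) c from rfl]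
    exact hC (c + 1) (by omega)
  refine ⟨hfuel, ?_, heq⟩
  intro a ha
  rw [heq] at ha
  rcases List.mem_append.1 ha with h | h
  · have : a ∈ phiW^[c] [0, 0] := by
      simpa [sInv] using (List.mem_rotate.1 h)
    have := hA c le_rfl a this
    omega
  · simp at h; omega

lemma phi_eq_sInv (c : ℕ) : phi c = sInv (phiW^[c] [0, 0]) ++ [c + 1] :=
  (phi_aux_master c).2.2

lemma mem_phi_le {a c : ℕ} (h : a ∈ phi c) : a ≤ c + 1 := (phi_aux_master c).2.1 a h

/-- φ^c(0) -/
def U (c : ℕ) : List ℕ := phiW^[c] [0]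
/-- φ^c(0) without its last letter -/
def Y (c : ℕ) : List ℕ := (U c).dropLast

lemma U_zero : U 0 = [0] := rfl
lemma U_succ (c : ℕ) : U (c + 1) = phiW (U c) := Function.iterate_succ_apply' _ _ _

lemma iterate00 (c : ℕ) : phiW^[c] [0, 0] = U c ++ U c := by
  induction c with
  | zero => rfl
  | succ c ih =>
    rw [Function.iterate_succ_apply', ih, phiW_append, U_succ]

lemma phi_ne_nil (c : ℕ) : phi c ≠ [] := by
  rw [phi_eq_sInv]; simp

lemma phiW_ne_nil {v : List ℕ} (h : v ≠ []) : phiW v ≠ [] := by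
  obtain ⟨a, t, rfl⟩ := List.exists_cons_of_ne_nil h
  rw [phiW_cons]
  simp [phi_ne_nil]

lemma U_ne_nil (c : ℕ) : U c ≠ [] := by
  induction c with
  | zero => simp [U_zero]
  | succ c ih => rw [U_succ]; exact phiW_ne_nil ih

lemma phi_concat (c : ℕ) : ∃ s, phi c = s ++ [c + 1] :=
  ⟨_, phi_eq_sInv c⟩

lemma U_concat : ∀ c, ∃ t, U c = t ++ [c] := by
  intro c
  induction c with
  | zero => exact ⟨[], rfl⟩
  | succ c ih =>
    obtain ⟨t, ht⟩ := ih
    obtain ⟨s, hs⟩ := phi_concat c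
    refine ⟨phiW t ++ s, ?_⟩
    rw [U_succ, ht, phiW_append, phiW_singleton, hs, List.append_assoc]

lemma U_eq (c : ℕ) : U c = Y c ++ [c] := by
  obtain ⟨t, ht⟩ := U_concat c
  have hy : Y c = t := by rw [Y, ht, List.dropLast_concat]
  rw [hy, ht]

lemma sInv_concat (t : List ℕ) (a : ℕ) : sInv (t ++ [a]) = a :: t := by
  unfold sInv
  have h1 : (t ++ [a]).length - 1 = t.length := by simp
  rw [h1, List.rotate_eq_drop_append_take (by simp), List.drop_left' (by simp), List.take_left]
  rfl

/-- Structure lemma: φ(c) = c · u_c · y_c · (c+1) where u_c = y_c · c. -/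
lemma phi_eq (c : ℕ) : phi c = [c] ++ U c ++ Y c ++ [c + 1] := by
  rw [phi_eq_sInv, iterate00]
  conv_lhs => rw [show U c ++ U c = (U c ++ Y c) ++ [c] by
    rw [List.append_assoc, ← U_eq]]
  rw [sInv_concat]
  simp

/-- Structure lemma: φ(c) = c · y_c · c · y_c · (c+1). -/
lemma phi_eq' (c : ℕ) : phi c = [c] ++ Y c ++ [c] ++ Y c ++ [c + 1] := by
  rw [phi_eq]
  conv_lhs => rw [U_eq]
  simp

lemma length_phi (c : ℕ) : (phi c).length = 2 * (U c).length + 1 := by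
  rw [phi_eq]
  have : (Y c).length + 1 = (U c).length := by
    conv_rhs => rw [U_eq]
    simp
  simp; omega

lemma U_length_pos (c : ℕ) : 0 < (U c).length :=
  List.length_pos_iff.2 (U_ne_nil c)

/-- dropLast of φ(c), two ways -/
lemma phi_dropLast (c : ℕ) : (phi c).dropLast = [c] ++ U c ++ Y c := by
  rw [phi_eq]
  rw [show [c] ++ U c ++ Y c ++ [c+1] = ([c] ++ U c ++ Y c) ++ [c+1] by simp]
  exact List.dropLast_concat ..

lemma phi_dropLast' (c : ℕ) : (phi c).dropLast = [c] ++ Y c ++ [c] ++ Y c := by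
  rw [phi_dropLast]
  conv_lhs => rw [U_eq]
  simp

/-- y_{c+1} ends with (φ c).dropLast -/
lemma phi_dropLast_suffix_Y (c : ℕ) : (phi c).dropLast <:+ Y (c + 1) := by
  have : Y (c + 1) = phiW (Y c) ++ (phi c).dropLast := by
    rw [Y, U_succ]
    conv_lhs => rw [U_eq c]
    rw [phiW_append, phiW_singleton]
    rw [List.dropLast_append_of_ne_nil (phi_ne_nil c)]
  rw [this]
  exact ⟨_, rfl⟩

lemma Y_suffix_Y (c : ℕ) : Y c <:+ Y (c + 1) := by
  refine List.IsSuffix.trans ?_ (phi_dropLast_suffix_Y c)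
  rw [phi_dropLast']
  exact ⟨_, rfl⟩

/-- For c < b, (φ c).dropLast is a suffix of y_b. -/
lemma phi_dropLast_suffix {c b : ℕ} (h : c < b) : (phi c).dropLast <:+ Y b := by
  induction b with
  | zero => omega
  | succ b ih =>
    rcases Nat.lt_or_ge c b with h' | h'
    · exact (ih h').trans (Y_suffix_Y b)
    · have : c = b := by omega
      subst this
      exact phi_dropLast_suffix_Y c

lemma U_head : ∀ c, ∃ t, U c = 0 :: t := by
  intro c
  induction c with
  | zero => exact ⟨[], rfl⟩
  | succ c ih =>
    obtain ⟨t, ht⟩ := ih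
    rw [U_succ, ht, phiW_cons, phi_eq' 0]
    exact ⟨_, rfl⟩

lemma mem_U_le : ∀ c, ∀ a ∈ U c, a ≤ c := by
  intro c
  induction c with
  | zero => intro a ha; simp [U_zero] at ha; omega
  | succ c ih =>
    intro a ha
    rw [U_succ] at ha
    obtain ⟨b, hb, hab⟩ := mem_phiW ha
    have := ih b hb
    have := mem_phi_le hab
    omega

/-- `w` is irreducible at (0-indexed) position `n` with respect to overlaps:
replacing the letter there by any strictly smaller letter produces a word having an
overlap a·x·a·x·a as a factor ending at that position (i.e. as a suffix of the prefix
of length `n+1` of the modified word). -/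
def OvIrredAt (w : List ℕ) (n : ℕ) : Prop :=
  ∀ (hn : n < w.length), ∀ c < w[n],
    ∃ (a : ℕ) (x : List ℕ),
      ([a] ++ x ++ [a] ++ x ++ [a]) <:+ ((w.set n c).take (n + 1))

/-- `w` is irreducible (with respect to overlaps) at every position. -/
def OvIrred (w : List ℕ) : Prop := ∀ n, OvIrredAt w n

/-- `w` is irreducible (with respect to overlaps) at every position except possibly
the first one. -/
def OvIrredAfterFirst (w : List ℕ) : Prop := ∀ n, 1 ≤ n → OvIrredAt w n

lemma set_take {W : List ℕ} {p : ℕ} (c : ℕ) (h : p < W.length) :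
    (W.set p c).take (p + 1) = W.take p ++ [c] := by
  rw [List.set_eq_take_append_cons_drop, if_pos h, List.take_append]
  have h1 : (W.take p).length = p := by simp; omega
  rw [List.take_of_length_le (by omega), h1]
  simp

lemma suffix_concat_last {zz s : List ℕ} {a c : ℕ} (h : zz ++ [a] <:+ s ++ [c]) :
    a = c ∧ zz <:+ s := by
  obtain ⟨t, ht⟩ := h
  rw [← List.append_assoc] at ht
  obtain ⟨h1, h2⟩ := List.append_inj' ht (by simp)
  refine ⟨by simpa using h2, t, h1⟩

lemma ov_of_suffix {c : ℕ} {x W : List ℕ} (h : ([c] ++ x ++ [c] ++ x) <:+ W) :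
    ∃ a y, ([a] ++ y ++ [a] ++ y ++ [a]) <:+ W ++ [c] := by
  obtain ⟨t, ht⟩ := h
  exact ⟨c, x, t, by rw [← ht]; simp⟩

lemma dec : ∀ (v : List ℕ) (p : ℕ), p < (phiW v).length →
    ∃ k, ∃ (hk : k < v.length), ∃ j, j < (phi (v[k]'hk)).length ∧
      p = (phiW (v.take k)).length + j := by
  intro v
  induction v with
  | nil => intro p hp; simp [phiW_nil] at hp
  | cons a t ih =>
    intro p hp
    rw [phiW_cons, List.length_append] at hp
    by_cases h : p < (phi a).length
    · exact ⟨0, by simp, p, by simpa using h, by simp [phiW_nil]⟩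
    · push_neg at h
      obtain ⟨k, hk, j, hj, hpeq⟩ := ih (p - (phi a).length) (by omega)
      refine ⟨k + 1, by simpa using hk, j, by simpa using hj, ?_⟩
      rw [List.take_succ_cons, phiW_cons, List.length_append]
      omega

lemma getElem_eq_last_take {l A : List ℕ} {a i : ℕ} (h : i < l.length)
    (hA : l.take (i + 1) = A ++ [a]) : l[i]'h = a := by
  have h1 : l.take (i + 1) = l.take i ++ [l[i]'h] := by
    rw [List.take_succ]
    simp [List.getElem?_eq_getElem h]
  rw [h1] at hA
  have := (List.append_inj' hA (by simp)).2
  simpa using this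

/-- Core lemma, proved by strong induction on a bound for the letters:
φ preserves irreducibility at positions ≥ 1, and `U n ++ U n` is irreducible
after the first position. -/
lemma core : ∀ n : ℕ,
    (∀ v : List ℕ, (∀ a ∈ v, a < n) → OvIrredAfterFirst v →
      ∀ p, 1 ≤ p → OvIrredAt (phiW v) p) ∧
    OvIrredAfterFirst (U n ++ U n) := by
  intro n
  induction n using Nat.strong_induction_on with
  | _ n IH =>
  have hM : ∀ v : List ℕ, (∀ a ∈ v, a < n) → OvIrredAfterFirst v →
      ∀ p, 1 ≤ p → OvIrredAt (phiW v) p := by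
    intro v hlt hv p hp hn c hc
    rw [set_take c hn]
    obtain ⟨k, hk, j, hj, hpeq⟩ := dec v p hn
    set b := v[k]'hk with hb
    -- decomposition of phiW v
    have hW : phiW v = phiW (v.take k) ++ (phi b ++ phiW (v.drop (k + 1))) := by
      conv_lhs => rw [← List.take_append_drop k v, List.drop_eq_getElem_cons hk]
      rw [phiW_append, phiW_cons]
    have htake : (phiW v).take p = phiW (v.take k) ++ (phi b).take j := by
      rw [hW, hpeq, List.take_length_add_append, List.take_append_of_le_length (by omega)]
    have hget : (phiW v)[p]'hn = (phi b)[j]'hj := by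
      have h1 : (phiW v)[p]'hn =
          (phi b ++ phiW (v.drop (k + 1)))[p - (phiW (v.take k)).length]'(by
            rw [hW] at hn; simp at hn ⊢; omega) := by
        conv_lhs => rw [List.getElem_of_eq hW]
        rw [List.getElem_append_right (by omega)]
      rw [h1]
      have h2 : p - (phiW (v.take k)).length = j := by omega
      simp_rw [h2]
      exact List.getElem_append_left hj
    rw [hget] at hc
    rw [htake]
    -- cases on j
    rcases Nat.eq_zero_or_pos j with hj0 | hjpos
    · -- block start: use irreducibility of v at k
      subst hj0
      have hk1 : 1 ≤ k := by
        rcases Nat.eq_zero_or_pos k with h0 | h1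
        · subst h0; simp [phiW_nil] at hpeq; omega
        · exact h1
      have h0 : (phi b)[0]'hj = b := by
        apply getElem_eq_last_take hj (A := [])
        rw [phi_eq' b]
        simp
      have hcb : c < b := by rw [h0] at hc; exact hc
      obtain ⟨a, x, hsuf⟩ := hv k hk1 hk c (by rw [← hb]; exact hcb)
      rw [set_take c hk] at hsuf
      have h3 : ([a] ++ x ++ [a] ++ x) ++ [a] <:+ v.take k ++ [c] := by
        simpa using hsuf
      obtain ⟨hac, hzz⟩ := suffix_concat_last h3
      subst hac
      -- map through phiW
      have hmap : phiW ([a] ++ x ++ [a] ++ x) =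
          [a] ++ ((Y a ++ [a] ++ Y a ++ [a + 1]) ++ phiW x) ++ [a]
            ++ ((Y a ++ [a] ++ Y a ++ [a + 1]) ++ phiW x) := by
        rw [phiW_append, phiW_append, phiW_append, phiW_singleton, phi_eq' a]
        simp
      have hsuf2 : [a] ++ ((Y a ++ [a] ++ Y a ++ [a + 1]) ++ phiW x) ++ [a]
            ++ ((Y a ++ [a] ++ Y a ++ [a + 1]) ++ phiW x) <:+ phiW (v.take k) := by
        rw [← hmap]; exact phiW_suffix hzz
      simp only [List.take_zero, List.append_nil]
      exact ov_of_suffix hsuf2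
    · rcases Nat.lt_or_ge j (2 * (U b).length) with hjlt | hjge
      · -- interior position: use Q b
        set q := j - 1 with hq
        have hyulen : (Y b).length + 1 = (U b).length := by
          conv_rhs => rw [U_eq]; simp
        have huu : U b ++ U b = (U b ++ Y b) ++ [b] := by
          rw [List.append_assoc, ← U_eq]
        have htkgen : ∀ m ≤ (U b).length + (Y b).length,
            (phi b).take (m + 1) = [b] ++ (U b ++ U b).take m := by
          intro m hm
          conv_lhs => rw [phi_eq b, show [b] ++ U b ++ Y b ++ [b+1] =
            [b] ++ ((U b ++ Y b) ++ [b+1]) by simp,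
            show m + 1 = [b].length + m by simp; omega]
          rw [List.take_length_add_append]
          congr 1
          rw [List.take_append_of_le_length (l₁ := U b ++ Y b) (l₂ := [b+1]) (by simp; omega)]
          conv_rhs => rw [huu]
          rw [List.take_append_of_le_length (l₁ := U b ++ Y b) (l₂ := [b]) (by simp; omega)]
        have htk2 : (phi b).take j = [b] ++ (U b ++ U b).take q := by
          have := htkgen q (by omega)
          rwa [show q + 1 = j by omega] at this
        have hqlen : q < (U b ++ U b).length := by simp; omega
        have hget2 : (phi b)[j]'hj = (U b ++ U b)[q]'hqlen := by
          apply getElem_eq_last_take hj (A := [b] ++ (U b ++ U b).take q)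
          rw [show j + 1 = (q + 1) + 1 by omega, htkgen (q+1) (by omega)]
          rw [List.take_succ, List.getElem?_eq_getElem hqlen]
          simp
        rw [hget2] at hc
        rcases Nat.eq_zero_or_pos q with hq0 | hqpos
        · -- q = 0 : the letter is 0, contradiction
          exfalso
          obtain ⟨t, ht⟩ := U_head b
          have h00 : (U b ++ U b)[q]'hqlen = 0 := by
            apply getElem_eq_last_take hqlen (A := [])
            rw [hq0, ht]
            simp
          rw [h00] at hc
          omega
        · -- q ≥ 1 : use irreducibility of U b ++ U b
          have hbn : b < n := hlt b (by rw [hb]; exact List.getElem_mem hk)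
          have hQ := (IH b hbn).2
          obtain ⟨a, x, hsuf⟩ := hQ q hqpos hqlen c hc
          rw [set_take c hqlen] at hsuf
          rw [htk2]
          refine ⟨a, x, hsuf.trans ?_⟩
          exact ⟨phiW (v.take k) ++ [b], by simp⟩
      · -- final position of the block
        have hjeq : j = 2 * (U b).length := by
          rw [length_phi] at hj; omega
        have hdrop : (phi b).take j = (phi b).dropLast := by
          rw [List.dropLast_eq_take, length_phi, hjeq]
          congr 1
        have hcb1 : c < b + 1 := by
          have h6 : (phi b)[j]'hj = b + 1 := by
            apply getElem_eq_last_take hj (A := [b] ++ U b ++ Y b)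
            rw [List.take_of_length_le (by rw [length_phi]; omega), phi_eq b]
          rwa [h6] at hc
        rw [hdrop]
        rcases Nat.lt_or_ge c b with hcb | hcb
        · -- c < b : local overlap via suffix chain
          have h7 : [c] ++ Y c ++ [c] ++ Y c <:+ (phi b).dropLast := by
            rw [← phi_dropLast' c]
            refine (phi_dropLast_suffix hcb).trans ?_
            rw [phi_dropLast' b]
            exact ⟨[b] ++ Y b ++ [b], by simp⟩
          exact ov_of_suffix (h7.trans ⟨_, rfl⟩)
        · -- c = b : the block prefix itself is c y c y
          have hcb' : c = b := by omega
          have h7 : [c] ++ Y c ++ [c] ++ Y c <:+ (phi b).dropLast := by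
            rw [hcb', phi_dropLast' b]
          exact ov_of_suffix (h7.trans ⟨_, rfl⟩)
  refine ⟨hM, ?_⟩
  cases n with
  | zero =>
    intro m hm hn c hc
    have h2 : m = 1 := by
      have : (U 0 ++ U 0).length = 2 := rfl
      omega
    subst h2
    have : (U 0 ++ U 0)[1] = 0 := rfl
    rw [this] at hc
    omega
  | succ m =>
    have hQm := (IH m (by omega)).2
    have he : U (m + 1) ++ U (m + 1) = phiW (U m ++ U m) := by
      rw [U_succ, phiW_append]
    rw [he]
    intro q hq
    refine hM (U m ++ U m) ?_ hQm q hq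
    intro a ha
    rcases List.mem_append.1 ha with h | h <;> have := mem_U_le m a h <;> omega
lemma mem_le_foldr_max : ∀ (w : List ℕ), ∀ a ∈ w, a ≤ w.foldr max 0 := by
  intro w
  induction w with
  | nil => intro a ha; simp at ha
  | cons b t ih =>
    intro a ha
    rcases List.mem_cons.1 ha with rfl | h
    · exact Nat.le_max_left _ _
    · exact le_trans (ih a h) (Nat.le_max_right _ _)


/-- φ preserves irreducibility with respect to overlaps, and also preserves
irreducibility after the first position. -/
theorem phi_preserves_irreducible (w : List ℕ) :
    (OvIrred w → OvIrred (phiW w)) ∧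
    (OvIrredAfterFirst w → OvIrredAfterFirst (phiW w)) := by
  have hlt : ∀ a ∈ w, a < w.foldr max 0 + 1 := by
    intro a ha
    have := mem_le_foldr_max w a ha
    omega
  constructor
  · intro hw p
    rcases Nat.eq_zero_or_pos p with rfl | hp
    · intro hn0 c hc
      have hwne : w ≠ [] := by
        intro h
        rw [h, phiW_nil] at hn0
        simp at hn0
      obtain ⟨a0, t, rfl⟩ := List.exists_cons_of_ne_nil hwne
      have ha0 : a0 = 0 := by
        by_contra h0
        obtain ⟨a, x, hsuf⟩ := hw 0 (by simp) 0 (by simp; omega)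
        have hlen := hsuf.length_le
        simp at hlen
      subst ha0
      have h1 : (phiW (0 :: t))[0]'hn0 = 0 := by
        apply getElem_eq_last_take hn0 (A := [])
        rw [phiW_cons, show phi 0 = [0, 0, 1] from by decide]
        rfl
      rw [h1] at hc
      omega
    · exact (core (w.foldr max 0 + 1)).1 w hlt (fun m _ => hw m) p hp
  · intro hw p hp
    exact (core (w.foldr max 0 + 1)).1 w hlt hw p hp
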